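/- Let a, b ∈ ℝ and c > 0. Then there exists a constant K > 0, depending only on a, b, c, such that for every real symmetric traceless 3×3 matrix Q one has (K/2)·tr(Q²) + (c/8)·(tr(Q²))² ≤ (K + a/2)·tr(Q²) − (b/3)·tr(Q³) + (c/4)·(tr(Q²))². -/

import Mathlib

open Matrix

theorem exists_K_bulk_lower_bound (a b c : ℝ) (hc : 0 < c) :
    ∃ K : ℝ, 0 < K ∧ ∀ Q : Matrix (Fin 3) (Fin 3) ℝ, Q.IsSymm → Q.trace = 0 →
      K / 2 * (Q ^ 2).trace + c / 8 * ((Q ^ 2).trace) ^ 2 ≤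
        (K + a / 2) * (Q ^ 2).trace - b / 3 * (Q ^ 3).trace
          + c / 4 * ((Q ^ 2).trace) ^ 2 := by
  refine ⟨1 + |a| + b ^ 2 / c, by positivity, ?_⟩
  intro Q hQ _
  have hsym : ∀ i j, Q j i = Q i j := fun i j => hQ.apply i j
  set t := (Q ^ 2).trace with htdef
  set s := (Q ^ 3).trace with hsdef
  have ht_eq : t = ∑ i : Fin 3, ∑ j : Fin 3, Q i j ^ 2 := by
    rw [htdef, Matrix.trace]
    simp only [Matrix.diag, pow_two, Matrix.mul_apply]
    exact Finset.sum_congr rfl fun i _ => Finset.sum_congr rfl fun j _ => by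
      rw [hsym i j]
  have ht : 0 ≤ t := by
    rw [ht_eq]; positivity
  -- norm of Q^2 bounded
  have hN : ∑ i : Fin 3, ∑ j : Fin 3, ((Q ^ 2) i j) ^ 2 ≤ t ^ 2 := by
    have h1 : ∀ i j : Fin 3, ((Q ^ 2) i j) ^ 2 ≤
        (∑ k : Fin 3, Q i k ^ 2) * (∑ k : Fin 3, Q k j ^ 2) := by
      intro i j
      have := Finset.sum_mul_sq_le_sq_mul_sq Finset.univ (fun k => Q i k) (fun k => Q k j)
      simpa [pow_two, Matrix.mul_apply] using this
    calc ∑ i : Fin 3, ∑ j : Fin 3, ((Q ^ 2) i j) ^ 2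
        ≤ ∑ i : Fin 3, ∑ j : Fin 3,
            (∑ k : Fin 3, Q i k ^ 2) * (∑ k : Fin 3, Q k j ^ 2) := by
          exact Finset.sum_le_sum fun i _ => Finset.sum_le_sum fun j _ => h1 i j
      _ = (∑ i : Fin 3, ∑ k : Fin 3, Q i k ^ 2) * (∑ j : Fin 3, ∑ k : Fin 3, Q k j ^ 2) := by
          rw [Finset.sum_mul]
          exact Finset.sum_congr rfl fun i _ => by rw [← Finset.mul_sum]
      _ = t ^ 2 := by
          rw [ht_eq, pow_two]
          congr 1
          rw [Finset.sum_comm]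
  have hs_eq : s = ∑ i : Fin 3, ∑ j : Fin 3, Q i j * (Q ^ 2) j i := by
    rw [hsdef, Matrix.trace]
    simp only [Matrix.diag, pow_succ, pow_two, Matrix.mul_apply]
    rw [Finset.sum_comm]
    refine Finset.sum_congr rfl fun j _ => Finset.sum_congr rfl fun i _ => ?_
    ring
  have hs2 : s ^ 2 ≤ t ^ 3 := by
    have hcs : (∑ i : Fin 3, ∑ j : Fin 3, Q i j * (Q ^ 2) j i) ^ 2 ≤
        (∑ i : Fin 3, ∑ j : Fin 3, Q i j ^ 2) *
        (∑ i : Fin 3, ∑ j : Fin 3, ((Q ^ 2) j i) ^ 2) := by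
      simpa only [Fintype.sum_prod_type] using Finset.sum_mul_sq_le_sq_mul_sq Finset.univ
        (fun p : Fin 3 × Fin 3 => Q p.1 p.2) (fun p : Fin 3 × Fin 3 => (Q ^ 2) p.2 p.1)
    have h2 : (∑ i : Fin 3, ∑ j : Fin 3, ((Q ^ 2) j i) ^ 2) ≤ t ^ 2 := by
      rw [Finset.sum_comm]; exact hN
    calc s ^ 2 = (∑ i : Fin 3, ∑ j : Fin 3, Q i j * (Q ^ 2) j i) ^ 2 := by rw [hs_eq]
      _ ≤ (∑ i : Fin 3, ∑ j : Fin 3, Q i j ^ 2) *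
            (∑ i : Fin 3, ∑ j : Fin 3, ((Q ^ 2) j i) ^ 2) := hcs
      _ ≤ t * t ^ 2 := by
          rw [← ht_eq]
          exact mul_le_mul_of_nonneg_left h2 ht
      _ = t ^ 3 := by ring
  -- key analytic inequality
  set d := b ^ 2 / c with hddef
  have hd : 0 ≤ d := by positivity
  have hcd : c * d = b ^ 2 := by rw [hddef]; field_simp [hc.ne']
  have key : b / 3 * s ≤ c / 8 * t ^ 2 + 2 / 9 * d * t := by
    have hP : 0 ≤ c / 8 * t ^ 2 + 2 / 9 * d * t := by positivity
    have hPq : (b / 3 * s) ^ 2 ≤ (c / 8 * t ^ 2 + 2 / 9 * d * t) ^ 2 := by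
      have h3 : b ^ 2 / 9 * s ^ 2 ≤ b ^ 2 / 9 * t ^ 3 :=
        mul_le_mul_of_nonneg_left hs2 (by positivity)
      nlinarith [sq_nonneg (c / 8 * t ^ 2 - 2 / 9 * d * t), hcd, ht, hd]
    nlinarith [hP, hPq]
  have ha : a ≥ -|a| := neg_abs_le a
  nlinarith [key, ht, hd, mul_nonneg ht hd,
    mul_nonneg ht (show (0:ℝ) ≤ |a| + a by linarith)]
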